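/- arXiv:1708.01296 — 2 statements merged into one kernel-verified Lean document; each statement's English description precedes it below -/
import Mathlib

section
/- Let y_1,...,y_N be distinct real points lying on one level set of r_N = φ_N/φ_{N−1} (none a root of φ_{N−1}). Define the N×N matrix V with entries V_{jk} = φ_{k−1}(y_j)/√(K(y_j)) where K(y) = Σ_{i=0}^{N−1} φ_i(y)². Then V is an orthogonal matrix: |det V| = 1 and all singular values equal 1. -/
open MeasureTheory Polynomial

namespace CDAux

variable (φ : ℕ → Polynomial ℝ) (ρ : ℝ → ℝ)

lemma expand (hdeg : ∀ n, (φ n).natDegree = n) (hlead : ∀ n, 0 < (φ n).leadingCoeff) :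
    ∀ d (p : Polynomial ℝ), p.natDegree ≤ d →
      ∃ c : ℕ → ℝ, p = ∑ i ∈ Finset.range (d+1), Polynomial.C (c i) * φ i := by
  intro d
  induction d with
  | zero =>
    intro p hp
    refine ⟨fun _ => p.coeff 0 / (φ 0).coeff 0, ?_⟩
    have h0 : (φ 0).coeff 0 = (φ 0).leadingCoeff := by
      rw [Polynomial.leadingCoeff, hdeg 0]
    have hne : (φ 0).coeff 0 ≠ 0 := by rw [h0]; exact (hlead 0).ne'
    have hφ : φ 0 = Polynomial.C ((φ 0).coeff 0) :=
      Polynomial.eq_C_of_natDegree_eq_zero (hdeg 0)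
    have hpC : p = Polynomial.C (p.coeff 0) :=
      Polynomial.eq_C_of_natDegree_eq_zero (Nat.le_zero.mp hp)
    rw [Finset.sum_range_one]
    calc p = Polynomial.C (p.coeff 0) := hpC
      _ = Polynomial.C (p.coeff 0 / (φ 0).coeff 0) * Polynomial.C ((φ 0).coeff 0) := by
          rw [← Polynomial.C_mul, div_mul_cancel₀ _ hne]
      _ = Polynomial.C (p.coeff 0 / (φ 0).coeff 0) * φ 0 := by rw [← hφ]
  | succ d ih =>
    intro p hp
    set L := (φ (d+1)).leadingCoeff with hL
    have hLne : L ≠ 0 := (hlead (d+1)).ne'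
    set q := p - Polynomial.C (p.coeff (d+1) / L) * φ (d+1) with hq
    have hqdeg : q.natDegree ≤ d := by
      rw [Polynomial.natDegree_le_iff_coeff_eq_zero]
      intro m hm
      rcases eq_or_lt_of_le (Nat.succ_le_of_lt hm) with h | h
      · -- m = d+1
        have hm1 : m = d + 1 := h.symm
        subst hm1
        have hc : (φ (d+1)).coeff (d+1) = L := by
          rw [hL, Polynomial.leadingCoeff, hdeg (d+1)]
        simp [hq, Polynomial.coeff_sub, Polynomial.coeff_C_mul, hc,
          div_mul_cancel₀ _ hLne]
      · -- m > d+1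
        have h1 : p.coeff m = 0 := Polynomial.coeff_eq_zero_of_natDegree_lt (lt_of_le_of_lt hp h)
        have h2 : (φ (d+1)).coeff m = 0 := Polynomial.coeff_eq_zero_of_natDegree_lt (by rw [hdeg]; exact h)
        simp [hq, Polynomial.coeff_sub, Polynomial.coeff_C_mul, h1, h2]
    obtain ⟨c, hc⟩ := ih q hqdeg
    refine ⟨fun i => if i = d + 1 then p.coeff (d+1) / L else c i, ?_⟩
    rw [Finset.sum_range_succ]
    beta_reduce
    rw [if_pos rfl]
    have : ∑ i ∈ Finset.range (d+1), Polynomial.C (if i = d + 1 then p.coeff (d+1) / L else c i) * φ i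
        = ∑ i ∈ Finset.range (d+1), Polynomial.C (c i) * φ i := by
      apply Finset.sum_congr rfl
      intro i hi
      have : i < d + 1 := Finset.mem_range.mp hi
      rw [if_neg (by omega)]
    rw [this, ← hc, hq]
    ring


lemma integral_sum_mul
    (hint : ∀ m n : ℕ, Integrable (fun x : ℝ => (φ m).eval x * (φ n).eval x * ρ x))
    (horth : ∀ m n : ℕ,
      ∫ x : ℝ, (φ m).eval x * (φ n).eval x * ρ x = if m = n then 1 else 0)
    (s : Finset ℕ) (c : ℕ → ℝ) (n : ℕ) :
    ∫ x : ℝ, (∑ i ∈ s, Polynomial.C (c i) * φ i).eval x * (φ n).eval x * ρ x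
      = ∑ i ∈ s, c i * (if i = n then 1 else 0) := by
  have hfun : (fun x : ℝ => (∑ i ∈ s, Polynomial.C (c i) * φ i).eval x * (φ n).eval x * ρ x)
      = fun x : ℝ => ∑ i ∈ s, c i * ((φ i).eval x * (φ n).eval x * ρ x) := by
    funext x
    rw [Polynomial.eval_finset_sum, Finset.sum_mul, Finset.sum_mul]
    apply Finset.sum_congr rfl
    intro i _
    simp [Polynomial.eval_mul]
    ring
  rw [hfun, MeasureTheory.integral_finset_sum]
  · apply Finset.sum_congr rfl
    intro i _
    rw [MeasureTheory.integral_const_mul, horth]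
  · intro i _
    exact (hint i n).const_mul (c i)

lemma integrable_poly_mul (hdeg : ∀ n, (φ n).natDegree = n) (hlead : ∀ n, 0 < (φ n).leadingCoeff)
    (hint : ∀ m n : ℕ, Integrable (fun x : ℝ => (φ m).eval x * (φ n).eval x * ρ x))
    (p : Polynomial ℝ) (n : ℕ) :
    Integrable (fun x : ℝ => p.eval x * (φ n).eval x * ρ x) := by
  obtain ⟨c, hc⟩ := expand φ hdeg hlead p.natDegree p le_rfl
  rw [hc]
  have hfun : (fun x : ℝ => (∑ i ∈ Finset.range (p.natDegree + 1), Polynomial.C (c i) * φ i).eval x * (φ n).eval x * ρ x)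
      = fun x : ℝ => ∑ i ∈ Finset.range (p.natDegree + 1), c i * ((φ i).eval x * (φ n).eval x * ρ x) := by
    funext x
    rw [Polynomial.eval_finset_sum, Finset.sum_mul, Finset.sum_mul]
    apply Finset.sum_congr rfl
    intro i _
    simp [Polynomial.eval_mul]
    ring
  rw [hfun]
  exact integrable_finset_sum _ (fun i _ => (hint i n).const_mul (c i))

lemma orth_lower (hdeg : ∀ n, (φ n).natDegree = n) (hlead : ∀ n, 0 < (φ n).leadingCoeff)
    (hint : ∀ m n : ℕ, Integrable (fun x : ℝ => (φ m).eval x * (φ n).eval x * ρ x))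
    (horth : ∀ m n : ℕ,
      ∫ x : ℝ, (φ m).eval x * (φ n).eval x * ρ x = if m = n then 1 else 0)
    (p : Polynomial ℝ) (n : ℕ) (h : p.natDegree < n) :
    ∫ x : ℝ, p.eval x * (φ n).eval x * ρ x = 0 := by
  obtain ⟨c, hc⟩ := expand φ hdeg hlead p.natDegree p le_rfl
  rw [hc, integral_sum_mul φ ρ hint horth]
  apply Finset.sum_eq_zero
  intro i hi
  have : i < p.natDegree + 1 := Finset.mem_range.mp hi
  rw [if_neg (by omega)]
  ring


noncomputable def aa (n : ℕ) : ℝ :=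
  ∫ x : ℝ, (Polynomial.X * φ n).eval x * (φ (n+1)).eval x * ρ x

noncomputable def bb (n : ℕ) : ℝ :=
  ∫ x : ℝ, (Polynomial.X * φ n).eval x * (φ n).eval x * ρ x

variable (hdeg : ∀ n, (φ n).natDegree = n) (hlead : ∀ n, 0 < (φ n).leadingCoeff)
    (hint : ∀ m n : ℕ, Integrable (fun x : ℝ => (φ m).eval x * (φ n).eval x * ρ x))
    (horth : ∀ m n : ℕ,
      ∫ x : ℝ, (φ m).eval x * (φ n).eval x * ρ x = if m = n then 1 else 0)

include hdeg hlead hint horth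

lemma phi_ne (n : ℕ) : φ n ≠ 0 := fun h => by
  have := hlead n; rw [h] at this; simp at this

lemma deg_X_mul (k : ℕ) : (Polynomial.X * φ k).natDegree = k + 1 := by
  rw [Polynomial.natDegree_mul Polynomial.X_ne_zero (phi_ne φ ρ hdeg hlead hint horth k),
    Polynomial.natDegree_X, hdeg]
  omega

lemma swap_int (k j : ℕ) :
    ∫ x : ℝ, (Polynomial.X * φ k).eval x * (φ j).eval x * ρ x
      = ∫ x : ℝ, (Polynomial.X * φ j).eval x * (φ k).eval x * ρ x := by
  congr 1
  funext x
  simp only [Polynomial.eval_mul, Polynomial.eval_X]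
  ring

lemma rec_general (k : ℕ) :
    ∃ c : ℕ → ℝ, (Polynomial.X * φ k = ∑ i ∈ Finset.range (k+2), Polynomial.C (c i) * φ i) ∧
      ∀ j, j < k + 2 → c j = ∫ x : ℝ, (Polynomial.X * φ k).eval x * (φ j).eval x * ρ x := by
  obtain ⟨c, hc⟩ := expand φ hdeg hlead (k+1) (Polynomial.X * φ k)
    (le_of_eq (deg_X_mul φ ρ hdeg hlead hint horth k))
  refine ⟨c, hc, fun j hj => ?_⟩
  rw [hc, integral_sum_mul φ ρ hint horth]
  rw [Finset.sum_congr rfl (fun i _ => by rw [mul_ite, mul_one, mul_zero]),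
    Finset.sum_ite_eq' (Finset.range (k+2)) j c, if_pos (Finset.mem_range.mpr hj)]

lemma recS (n : ℕ) :
    Polynomial.X * φ (n+1) = Polynomial.C (aa φ ρ (n+1)) * φ (n+2)
      + Polynomial.C (bb φ ρ (n+1)) * φ (n+1) + Polynomial.C (aa φ ρ n) * φ n := by
  obtain ⟨c, hc, hcoef⟩ := rec_general φ ρ hdeg hlead hint horth (n+1)
  have hzero : ∀ i, i < n → c i = 0 := by
    intro i hi
    rw [hcoef i (by omega), swap_int φ ρ hdeg hlead hint horth]
    exact orth_lower φ ρ hdeg hlead hint horth _ _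
      (by rw [deg_X_mul φ ρ hdeg hlead hint horth]; omega)
  have hcn : c n = aa φ ρ n := by
    rw [hcoef n (by omega), swap_int φ ρ hdeg hlead hint horth]; rfl
  have hcn1 : c (n+1) = bb φ ρ (n+1) := hcoef (n+1) (by omega)
  have hcn2 : c (n+2) = aa φ ρ (n+1) := hcoef (n+2) (by omega)
  rw [hc]
  rw [show n + 1 + 2 = (n+2)+1 by omega, Finset.sum_range_succ,
    Finset.sum_range_succ, Finset.sum_range_succ]
  rw [Finset.sum_eq_zero (fun i hi => by
    rw [hzero i (Finset.mem_range.mp hi), Polynomial.C_0, zero_mul]),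
    hcn, hcn1, hcn2]
  ring

lemma rec0 :
    Polynomial.X * φ 0 = Polynomial.C (aa φ ρ 0) * φ 1 + Polynomial.C (bb φ ρ 0) * φ 0 := by
  obtain ⟨c, hc, hcoef⟩ := rec_general φ ρ hdeg hlead hint horth 0
  have hc0 : c 0 = bb φ ρ 0 := hcoef 0 (by omega)
  have hc1 : c 1 = aa φ ρ 0 := hcoef 1 (by omega)
  rw [hc, Finset.sum_range_succ, Finset.sum_range_one, hc0, hc1]
  ring

lemma CD (n : ℕ) (x t : ℝ) :
    (x - t) * ∑ k ∈ Finset.range (n+1), (φ k).eval x * (φ k).eval t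
      = aa φ ρ n * ((φ (n+1)).eval x * (φ n).eval t - (φ n).eval x * (φ (n+1)).eval t) := by
  induction n with
  | zero =>
    have hx := congrArg (Polynomial.eval x) (rec0 φ ρ hdeg hlead hint horth)
    have ht := congrArg (Polynomial.eval t) (rec0 φ ρ hdeg hlead hint horth)
    simp only [Polynomial.eval_mul, Polynomial.eval_X, Polynomial.eval_add,
      Polynomial.eval_C] at hx ht
    rw [Finset.sum_range_one]
    linear_combination (φ 0).eval t * hx - (φ 0).eval x * ht
  | succ m ih =>
    have hx := congrArg (Polynomial.eval x) (recS φ ρ hdeg hlead hint horth m)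
    have ht := congrArg (Polynomial.eval t) (recS φ ρ hdeg hlead hint horth m)
    simp only [Polynomial.eval_mul, Polynomial.eval_X, Polynomial.eval_add,
      Polynomial.eval_C] at hx ht
    rw [Finset.sum_range_succ, mul_add]
    linear_combination ih + (φ (m+1)).eval t * hx - (φ (m+1)).eval x * ht

end CDAux


/-- For orthonormal polynomials `(φ_n)` w.r.t. a probability density `ρ` on ℝ: if distinct
points `y_1,...,y_N` (none a root of `φ_{N−1}`) lie on a common level set of
`r_N = φ_N/φ_{N−1}`, then the matrix `V` with entries `φ_{k}(y_j)/√K(y_j)`,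
`K(y) = Σ_{i<N} φ_i(y)²`, is an orthogonal matrix: `V Vᵀ = VᵀV = I` and `|det V| = 1`. -/
theorem normalized_eval_matrix_orthogonal (φ : ℕ → Polynomial ℝ) (ρ : ℝ → ℝ)
    (hρ : ∀ x, 0 ≤ ρ x) (hρ1 : ∫ x : ℝ, ρ x = 1)
    (hdeg : ∀ n, (φ n).natDegree = n)
    (hlead : ∀ n, 0 < (φ n).leadingCoeff)
    (hint : ∀ m n : ℕ, Integrable (fun x : ℝ => (φ m).eval x * (φ n).eval x * ρ x))
    (horth : ∀ m n : ℕ,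
      ∫ x : ℝ, (φ m).eval x * (φ n).eval x * ρ x = if m = n then 1 else 0)
    (N : ℕ) (hN : 1 ≤ N) (y : Fin N → ℝ) (hy : Function.Injective y)
    (hnz : ∀ q : Fin N, (φ (N - 1)).eval (y q) ≠ 0)
    (hlevel : ∀ q q' : Fin N,
      (φ N).eval (y q) / (φ (N - 1)).eval (y q) =
        (φ N).eval (y q') / (φ (N - 1)).eval (y q')) :
    let K : ℝ → ℝ := fun s => ∑ i ∈ Finset.range N, ((φ i).eval s) ^ 2
    let V : Matrix (Fin N) (Fin N) ℝ :=
      Matrix.of fun j k => (φ (k : ℕ)).eval (y j) / Real.sqrt (K (y j))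
    V * V.transpose = 1 ∧ V.transpose * V = 1 ∧ |V.det| = 1 := by
  intro K V
  set M := N - 1 with hM
  have hNM : N = M + 1 := by omega
  -- positivity of K at the points
  have hKpos : ∀ j : Fin N, 0 < K (y j) := by
    intro j
    have h1 : ((φ M).eval (y j)) ^ 2 ≤ K (y j) :=
      Finset.single_le_sum (f := fun i => ((φ i).eval (y j)) ^ 2)
        (fun i _ => sq_nonneg _) (Finset.mem_range.mpr (by omega))
    have h2 : 0 < ((φ M).eval (y j)) ^ 2 :=
      lt_of_le_of_ne (sq_nonneg _) (Ne.symm (pow_ne_zero 2 (hnz j)))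
    linarith
  -- off-diagonal sums vanish via Christoffel–Darboux
  have hoff : ∀ j j' : Fin N, j ≠ j' →
      ∑ k ∈ Finset.range N, (φ k).eval (y j) * (φ k).eval (y j') = 0 := by
    intro j j' hjj
    have hxy : y j - y j' ≠ 0 := sub_ne_zero.mpr (fun h => hjj (hy h))
    have hcd := CDAux.CD φ ρ hdeg hlead hint horth M (y j) (y j')
    have hbr : (φ (M+1)).eval (y j) * (φ M).eval (y j')
        - (φ M).eval (y j) * (φ (M+1)).eval (y j') = 0 := by
      have hl := hlevel j j'
      rw [div_eq_div_iff (hnz j) (hnz j')] at hl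
      rw [hNM] at hl
      linear_combination hl
    rw [hbr, mul_zero] at hcd
    have := mul_eq_zero.mp hcd
    rcases this with h | h
    · exact absurd h hxy
    · rw [hNM]; exact h
  -- row orthonormality
  have hVVt : V * V.transpose = 1 := by
    ext j j'
    rw [Matrix.mul_apply, Matrix.one_apply]
    have hterm : ∀ k : Fin N, V j k * V.transpose k j'
        = (φ (k : ℕ)).eval (y j) * (φ (k : ℕ)).eval (y j')
          * (Real.sqrt (K (y j)) * Real.sqrt (K (y j')))⁻¹ := by
      intro k
      simp only [Matrix.transpose_apply, V, Matrix.of_apply]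
      rw [mul_inv]
      ring
    rw [Finset.sum_congr rfl (fun k _ => hterm k), ← Finset.sum_mul]
    rw [Fin.sum_univ_eq_sum_range (fun k => (φ k).eval (y j) * (φ k).eval (y j')) N]
    by_cases h : j = j'
    · subst h
      rw [if_pos rfl]
      have : ∑ k ∈ Finset.range N, (φ k).eval (y j) * (φ k).eval (y j) = K (y j) := by
        apply Finset.sum_congr rfl
        intro k _
        ring
      rw [this, Real.mul_self_sqrt (hKpos j).le, mul_inv_cancel₀ (hKpos j).ne']
    · rw [if_neg h, hoff j j' h, zero_mul]
  refine ⟨hVVt, mul_eq_one_comm.mp hVVt, ?_⟩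
  have hdet : V.det * V.det = 1 := by
    have := congrArg Matrix.det hVVt
    rwa [Matrix.det_mul, Matrix.det_transpose, Matrix.det_one] at this
  rcases mul_self_eq_one_iff.mp hdet with h | h <;> rw [h] <;> norm_num
end

section
/- Suppose distinct points y_1,...,y_N ∈ ℝ and positive weights w_q = 1/K(y_q) with K(y) = Σ_{i=0}^{N−1} φ_i(y)² satisfy Σ_{q=1}^N w_q φ_i(y_q) φ_j(y_q) = δ_{ij} for all 0 ≤ i,j ≤ N−1. Then the quadrature rule p ↦ Σ_{q=1}^N w_q p(y_q) exactly integrates every polynomial p of degree ≤ 2N−2 against ρ: Σ_{q=1}^N w_q p(y_q) = ∫ p(z) ρ(z) dz. -/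
open MeasureTheory Polynomial

lemma rep_aux (φ : ℕ → Polynomial ℝ) (hdeg : ∀ n, (φ n).natDegree = n)
    (hlead : ∀ n, 0 < (φ n).leadingCoeff) :
    ∀ n (p : Polynomial ℝ), p.degree < (n : ℕ) → ∃ c : ℕ → ℝ,
      p = ∑ i ∈ Finset.range n, Polynomial.C (c i) * φ i := by
  intro n
  induction n with
  | zero =>
    intro p hp
    rw [Nat.cast_zero, Nat.WithBot.lt_zero_iff, degree_eq_bot] at hp
    exact ⟨0, by simp [hp]⟩
  | succ n ih =>
    intro p hp
    have hφn : φ n ≠ 0 := fun h0 => by simpa [h0] using (hlead n)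
    by_cases h : p.degree < (n : ℕ)
    · obtain ⟨c, hc⟩ := ih p h
      refine ⟨Function.update c n 0, ?_⟩
      rw [Finset.sum_range_succ, Function.update_self]
      simp only [map_zero, zero_mul, add_zero]
      rw [hc]
      exact Finset.sum_congr rfl fun i hi => by
        rw [Function.update_of_ne (Finset.mem_range.mp hi).ne]
    · have hp0 : p ≠ 0 := by
        intro h0; apply h; rw [h0, degree_zero]; exact WithBot.bot_lt_coe n
      have hpd : p.degree = (n : ℕ) := by
        have h1 : p.natDegree < n + 1 := by
          rwa [natDegree_lt_iff_degree_lt hp0, Nat.cast_add, Nat.cast_one]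
        have h2 : ¬ p.natDegree < n := fun hlt => h (by
          rwa [← natDegree_lt_iff_degree_lt hp0])
        rw [degree_eq_natDegree hp0]
        exact_mod_cast show p.natDegree = n by omega
      set a : ℝ := p.leadingCoeff / (φ n).leadingCoeff with ha
      have hlc : (Polynomial.C a * φ n).leadingCoeff = p.leadingCoeff := by
        rw [leadingCoeff_mul, leadingCoeff_C, ha, div_mul_cancel₀]
        exact (hlead n).ne'
      have ha0 : a ≠ 0 := by
        intro h0
        rw [h0, map_zero, zero_mul] at hlc
        exact hp0 (leadingCoeff_eq_zero.mp hlc.symm)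
      have hdC : (Polynomial.C a * φ n).degree = (n : ℕ) := by
        rw [degree_C_mul ha0, degree_eq_natDegree hφn, hdeg n]
      have hsub : (p - Polynomial.C a * φ n).degree < (n : ℕ) := by
        have := degree_sub_lt (hpd.trans hdC.symm) hp0 hlc.symm
        rwa [hpd] at this
      obtain ⟨c, hc⟩ := ih _ hsub
      refine ⟨Function.update c n a, ?_⟩
      rw [Finset.sum_range_succ, Function.update_self]
      have : ∑ i ∈ Finset.range n, Polynomial.C (Function.update c n a i) * φ i
          = ∑ i ∈ Finset.range n, Polynomial.C (c i) * φ i :=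
        Finset.sum_congr rfl fun i hi => by
          rw [Function.update_of_ne (Finset.mem_range.mp hi).ne]
      rw [this, ← hc]
      ring

/-- If distinct points `y_q` with weights `w_q = 1/K(y_q)`, `K(y) = Σ_{i<N} φ_i(y)²`,
reproduce the orthonormality relations of `φ_0,...,φ_{N−1}` (orthonormal polynomials for
a probability density `ρ`, `φ_0 ≡ 1`), then the quadrature rule integrates every
polynomial of degree ≤ 2N−2 exactly against `ρ`. -/
theorem discrete_orthonormality_implies_quadrature_exactness
    (φ : ℕ → Polynomial ℝ) (ρ : ℝ → ℝ)
    (hρ : ∀ x, 0 ≤ ρ x) (hρ1 : ∫ x : ℝ, ρ x = 1)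
    (hdeg : ∀ n, (φ n).natDegree = n)
    (hlead : ∀ n, 0 < (φ n).leadingCoeff)
    (hφ0 : φ 0 = 1)
    (hint : ∀ m n : ℕ, Integrable (fun x : ℝ => (φ m).eval x * (φ n).eval x * ρ x))
    (horth : ∀ m n : ℕ,
      ∫ x : ℝ, (φ m).eval x * (φ n).eval x * ρ x = if m = n then 1 else 0)
    (N : ℕ) (hN : 1 ≤ N) (y : Fin N → ℝ) (hy : Function.Injective y)
    (hdisc : ∀ i j : ℕ, i < N → j < N →
      ∑ q : Fin N, (1 / ∑ k ∈ Finset.range N, ((φ k).eval (y q)) ^ 2) *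
        ((φ i).eval (y q)) * ((φ j).eval (y q)) = if i = j then 1 else 0) :
    ∀ p : Polynomial ℝ, p.natDegree ≤ 2 * N - 2 →
      ∑ q : Fin N, (1 / ∑ k ∈ Finset.range N, ((φ k).eval (y q)) ^ 2) * p.eval (y q) =
        ∫ z : ℝ, p.eval z * ρ z := by
  intro p hpdeg
  set Φ : Polynomial ℝ := φ (N - 1) with hΦ
  have hΦ0 : Φ ≠ 0 := fun h0 => by simp [hΦ, h0] at *; exact absurd (hlead (N-1)) (by simp [h0])
  set qq : Polynomial ℝ := p / Φ with hqq
  set rr : Polynomial ℝ := p % Φ with hrr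
  have hsplit : Φ * qq + rr = p := EuclideanDomain.div_add_mod p Φ
  have hΦdeg : Φ.degree = ((N - 1 : ℕ) : WithBot ℕ) := by
    rw [degree_eq_natDegree hΦ0, hΦ, hdeg]
  have hrdeg : rr.degree < ((N - 1 : ℕ) : WithBot ℕ) := by
    rw [← hΦdeg]
    exact EuclideanDomain.mod_lt p hΦ0
  have hrnat : rr.natDegree ≤ N - 1 := by
    rw [← hdeg (N-1)]
    exact natDegree_le_natDegree (le_of_lt (hΦdeg ▸ hrdeg))
  have hqdeg : qq.degree < ((N : ℕ) : WithBot ℕ) := by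
    by_cases h0 : qq = 0
    · rw [h0, degree_zero]; exact WithBot.bot_lt_coe N
    · rw [← natDegree_lt_iff_degree_lt h0]
      have hmul : (Φ * qq).natDegree = (N - 1) + qq.natDegree := by
        rw [natDegree_mul hΦ0 h0, hΦ, hdeg]
      have h1 : (Φ * qq).natDegree ≤ 2 * N - 2 := by
        have : Φ * qq = p - rr := by rw [← hsplit]; ring
        rw [this]
        refine le_trans (natDegree_sub_le p rr) ?_
        exact max_le hpdeg (by omega)
      omega
  obtain ⟨a, ha⟩ := rep_aux φ hdeg hlead N qq hqdeg
  obtain ⟨b, hb⟩ := rep_aux φ hdeg hlead (N - 1) rr hrdeg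
  have heval : ∀ x : ℝ, p.eval x =
      (∑ i ∈ Finset.range N, a i * ((φ (N-1)).eval x * (φ i).eval x))
      + ∑ j ∈ Finset.range (N-1), b j * ((φ 0).eval x * (φ j).eval x) := by
    intro x
    have h1 : Φ.eval x * qq.eval x
        = ∑ i ∈ Finset.range N, a i * ((φ (N-1)).eval x * (φ i).eval x) := by
      rw [ha]
      simp only [eval_finset_sum, eval_mul, eval_C, Finset.mul_sum]
      exact Finset.sum_congr rfl fun i _ => by rw [hΦ]; ring
    have h2 : rr.eval x
        = ∑ j ∈ Finset.range (N-1), b j * ((φ 0).eval x * (φ j).eval x) := by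
      rw [hb]
      simp only [eval_finset_sum, eval_mul, eval_C, hφ0, eval_one, one_mul]
    rw [← hsplit, eval_add, eval_mul, h1, h2]
  have hL : ∑ q : Fin N, (1 / ∑ k ∈ Finset.range N, ((φ k).eval (y q)) ^ 2) * p.eval (y q)
      = (∑ i ∈ Finset.range N, a i * (if N - 1 = i then (1:ℝ) else 0))
      + ∑ j ∈ Finset.range (N-1), b j * (if 0 = j then (1:ℝ) else 0) := by
    have step1 : ∑ q : Fin N, (1 / ∑ k ∈ Finset.range N, ((φ k).eval (y q)) ^ 2) * p.eval (y q)
        = ∑ q : Fin N,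
          ((∑ i ∈ Finset.range N, a i *
            ((1 / ∑ k ∈ Finset.range N, ((φ k).eval (y q)) ^ 2) *
              ((φ (N-1)).eval (y q)) * ((φ i).eval (y q))))
          + ∑ j ∈ Finset.range (N-1), b j *
            ((1 / ∑ k ∈ Finset.range N, ((φ k).eval (y q)) ^ 2) *
              ((φ 0).eval (y q)) * ((φ j).eval (y q)))) := by
      refine Finset.sum_congr rfl fun q _ => ?_
      rw [heval (y q), mul_add, Finset.mul_sum, Finset.mul_sum]
      congr 1 <;> exact Finset.sum_congr rfl fun i _ => by ring
    rw [step1, Finset.sum_add_distrib]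
    congr 1
    · rw [Finset.sum_comm]
      refine Finset.sum_congr rfl fun i hi => ?_
      rw [← Finset.mul_sum, hdisc (N-1) i (by omega) (Finset.mem_range.mp hi)]
    · rw [Finset.sum_comm]
      refine Finset.sum_congr rfl fun j hj => ?_
      rw [← Finset.mul_sum, hdisc 0 j (by omega) (by have := Finset.mem_range.mp hj; omega)]
  have hR : ∫ z : ℝ, p.eval z * ρ z
      = (∑ i ∈ Finset.range N, a i * (if N - 1 = i then (1:ℝ) else 0))
      + ∑ j ∈ Finset.range (N-1), b j * (if 0 = j then (1:ℝ) else 0) := by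
    have hpt : (fun z : ℝ => p.eval z * ρ z)
        = fun z : ℝ =>
          (∑ i ∈ Finset.range N, a i * ((φ (N-1)).eval z * (φ i).eval z * ρ z))
          + ∑ j ∈ Finset.range (N-1), b j * ((φ 0).eval z * (φ j).eval z * ρ z) := by
      funext z
      rw [heval z, add_mul, Finset.sum_mul, Finset.sum_mul]
      congr 1 <;> exact Finset.sum_congr rfl fun i _ => by ring
    rw [hpt]
    rw [integral_add
      (integrable_finset_sum _ fun i _ => (hint (N-1) i).const_mul (a i))
      (integrable_finset_sum _ fun j _ => (hint 0 j).const_mul (b j)),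
      integral_finset_sum _ (fun i _ => (hint (N-1) i).const_mul (a i)),
      integral_finset_sum _ (fun j _ => (hint 0 j).const_mul (b j))]
    congr 1
    · exact Finset.sum_congr rfl fun i _ => by rw [integral_const_mul _ _, horth (N-1) i]
    · exact Finset.sum_congr rfl fun j _ => by rw [integral_const_mul _ _, horth 0 j]
  rw [hL, hR]
end
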